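/- For every real number M ≥ 0, every natural number k, and every real number z with |z| ≤ M, the degree-k Taylor polynomial of the exponential function satisfies |e^z − Σ_{j=0}^k z^j/j!| ≤ e^{2eM − k}, where e is Euler's number. -/

import Mathlib

open scoped Matrix Kronecker ComplexOrder

/-- The positive semidefinite square root (the definition Mathlib had in December 2024). -/
noncomputable def Matrix.PosSemidef.sqrt {n 𝕜 : Type*} [Fintype n] [DecidableEq n] [RCLike 𝕜]
    {A : Matrix n n 𝕜} (hA : A.PosSemidef) : Matrix n n 𝕜 :=
  hA.1.eigenvectorUnitary.1 * Matrix.diagonal (fun i => ((Real.sqrt (hA.1.eigenvalues i) : ℝ) : 𝕜)) *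
    (star hA.1.eigenvectorUnitary : Matrix n n 𝕜)

/-- The operator (spectral) norm of a square complex matrix. -/
noncomputable def opNorm {n : Type*} [Fintype n] [DecidableEq n] (A : Matrix n n ℂ) : ℝ :=
  ‖Matrix.toEuclideanCLM (𝕜 := ℂ) A‖

/-- The trace norm `‖A‖₁ = Tr √(Aᴴ A)` of a square complex matrix. -/
noncomputable def traceNorm {n : Type*} [Fintype n] [DecidableEq n] (A : Matrix n n ℂ) : ℝ :=
  ((Matrix.posSemidef_conjTranspose_mul_self A).sqrt.trace).re

/-- The (square-root) fidelity `F(ρ,σ) = ‖√ρ √σ‖₁` of positive semidefinite matrices. -/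
noncomputable def fidelity {n : Type*} [Fintype n] [DecidableEq n] {ρ σ : Matrix n n ℂ}
    (hρ : ρ.PosSemidef) (hσ : σ.PosSemidef) : ℝ :=
  traceNorm (hρ.sqrt * hσ.sqrt)

/-- Functional calculus for a Hermitian matrix: `f(A) = Σ_i f(λ_i) |v_i⟩⟨v_i|`. -/
noncomputable def matFun {n : Type*} [Fintype n] [DecidableEq n] {A : Matrix n n ℂ}
    (hA : A.IsHermitian) (f : ℝ → ℝ) : Matrix n n ℂ :=
  (hA.eigenvectorUnitary : Matrix n n ℂ) *
    Matrix.diagonal (fun i => (f (hA.eigenvalues i) : ℂ)) *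
    (star (hA.eigenvectorUnitary : Matrix n n ℂ))

/-- Partial trace over the first tensor factor. -/
noncomputable def ptraceA {a b : Type*} [Fintype a] (X : Matrix (a × b) (a × b) ℂ) :
    Matrix b b ℂ :=
  Matrix.of fun i j => ∑ k, X (k, i) (k, j)

/-- Partial trace over the second tensor factor. -/
noncomputable def ptraceB {a b : Type*} [Fintype b] (X : Matrix (a × b) (a × b) ℂ) :
    Matrix a a ℂ :=
  Matrix.of fun i j => ∑ k, X (i, k) (j, k)

/-- The outer product `|ψ⟩⟨φ|`. -/
def outer {a : Type*} (ψ φ : a → ℂ) : Matrix a a ℂ :=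
  Matrix.of fun i j => ψ i * (starRingEnd ℂ) (φ j)

/-- The Euclidean norm of a finitely supported complex vector. -/
noncomputable def evnorm {a : Type*} [Fintype a] (v : a → ℂ) : ℝ :=
  Real.sqrt (∑ i, ‖v i‖ ^ 2)

/-- For `M ≥ 0`, `k : ℕ` and `|z| ≤ M`, the degree-`k` Taylor polynomial of the exponential
satisfies `|e^z − Σ_{j=0}^k z^j/j!| ≤ e^{2eM − k}`. -/
theorem exp_taylor_remainder (M : ℝ) (hM : 0 ≤ M) (k : ℕ) (z : ℝ) (hz : |z| ≤ M) :
    |Real.exp z - ∑ j ∈ Finset.range (k + 1), z ^ j / (j.factorial : ℝ)| ≤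
      Real.exp (2 * Real.exp 1 * M - k) := by
  have hsum : Summable (fun n : ℕ => z ^ n / n.factorial : ℕ → ℝ) :=
    Real.summable_pow_div_factorial z
  have hexp : Real.exp z = ∑' n : ℕ, z ^ n / n.factorial := by
    rw [Real.exp_eq_exp_ℝ, NormedSpace.exp_eq_tsum_div]
  have hsplit := Summable.sum_add_tsum_nat_add (f := fun n : ℕ => z ^ n / n.factorial) (k + 1) hsum
  have hrem : Real.exp z - ∑ j ∈ Finset.range (k + 1), z ^ j / (j.factorial : ℝ)
      = ∑' n : ℕ, z ^ (n + (k + 1)) / ((n + (k + 1)).factorial : ℝ) := by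
    rw [hexp, ← hsplit]; ring
  -- term bound: |z|^j / j! ≤ exp (e*M - j)
  have hterm : ∀ j : ℕ, |z| ^ j / (j.factorial : ℝ) ≤ Real.exp (Real.exp 1 * M - j) := by
    intro j
    have h1 : (Real.exp 1 * |z|) ^ j / (j.factorial : ℝ) ≤ Real.exp (Real.exp 1 * M) := by
      refine le_trans (Real.pow_div_factorial_le_exp _ (by positivity) j) (Real.exp_le_exp.2 ?_)
      exact mul_le_mul_of_nonneg_left hz (Real.exp_pos 1).le
    have hepos : (0:ℝ) < Real.exp 1 ^ j := pow_pos (Real.exp_pos 1) j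
    have h2 : |z| ^ j / (j.factorial : ℝ)
        = ((Real.exp 1 * |z|) ^ j / (j.factorial : ℝ)) / Real.exp 1 ^ j := by
      rw [mul_pow]; field_simp
    have hej : Real.exp (j : ℝ) = Real.exp 1 ^ j := by
      rw [← Real.exp_nat_mul]; norm_num
    rw [h2, Real.exp_sub, hej]
    gcongr
  set f : ℕ → ℝ := fun n => z ^ (n + (k + 1)) / ((n + (k + 1)).factorial : ℝ) with hf
  set g : ℕ → ℝ := fun n =>
    Real.exp (Real.exp 1 * M - (k + 1)) * (Real.exp 1)⁻¹ ^ n with hg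
  have hlt : (Real.exp 1)⁻¹ < 1 := by
    rw [inv_lt_one_iff₀]; right; have := Real.exp_one_gt_d9; linarith
  have hinv_nonneg : (0:ℝ) ≤ (Real.exp 1)⁻¹ := by positivity
  have hg_sum : Summable g :=
    (summable_geometric_of_lt_one hinv_nonneg hlt).mul_left _
  have hfg : ∀ n, |f n| ≤ g n := by
    intro n
    have : |f n| = |z| ^ (n + (k + 1)) / ((n + (k + 1)).factorial : ℝ) := by
      rw [hf, abs_div, abs_pow, abs_of_nonneg (by positivity : (0:ℝ) ≤ ((n + (k+1)).factorial : ℝ))]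
    rw [this]
    refine (hterm (n + (k + 1))).trans_eq ?_
    rw [hg]
    push_cast
    rw [show Real.exp 1 * M - (↑n + (↑k + 1)) = (Real.exp 1 * M - (↑k + 1)) + (↑n * (-1)) by ring,
      Real.exp_add, Real.exp_nat_mul, Real.exp_neg]
  have hfabs_sum : Summable (fun n => |f n|) :=
    Summable.of_nonneg_of_le (fun n => abs_nonneg _) hfg hg_sum
  have h3 : |∑' n, f n| ≤ ∑' n, g n := by
    have hnorm : Summable (fun n => ‖f n‖) := by
      simp only [Real.norm_eq_abs]; exact hfabs_sum
    have h3a := norm_tsum_le_tsum_norm (f := f) hnorm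
    simp only [Real.norm_eq_abs] at h3a
    exact h3a.trans (Summable.tsum_le_tsum hfg hfabs_sum hg_sum)
  have htg : ∑' n, g n = Real.exp (Real.exp 1 * M - (k + 1)) * (1 - (Real.exp 1)⁻¹)⁻¹ := by
    rw [hg, tsum_mul_left, tsum_geometric_of_lt_one hinv_nonneg hlt]
  rw [hrem]
  refine h3.trans ?_
  rw [htg]
  have he2 : (2:ℝ) ≤ Real.exp 1 := by
    have := Real.exp_one_gt_d9; linarith
  have hfrac : (1 - (Real.exp 1)⁻¹)⁻¹ ≤ Real.exp 1 := by
    rw [inv_le_comm₀ (by rw [sub_pos, inv_lt_one_iff₀]; right; linarith) (by linarith)]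
    have : (Real.exp 1)⁻¹ ≤ 1/2 := by
      rw [inv_le_comm₀ (by linarith) (by norm_num)]; linarith
    linarith
  calc Real.exp (Real.exp 1 * M - (k + 1)) * (1 - (Real.exp 1)⁻¹)⁻¹
      ≤ Real.exp (Real.exp 1 * M - (k + 1)) * Real.exp 1 := by
        exact mul_le_mul_of_nonneg_left hfrac (Real.exp_pos _).le
    _ = Real.exp (Real.exp 1 * M - k) := by rw [← Real.exp_add]; ring_nf
    _ ≤ Real.exp (2 * Real.exp 1 * M - k) := by
        apply Real.exp_le_exp.2
        nlinarith [Real.exp_pos 1]
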